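/- Let k and ℓ be positive integers and let p, q be integers. Then A^k_{p,a}·A^ℓ_{a,q} = 0 for every integer a outside the range p + k ≤ a ≤ q − ℓ, and ∑_{a=p+k}^{q−ℓ} A^k_{p,a} · A^ℓ_{a,q} = A^{k+ℓ}_{p,q} (the sum being interpreted as 0 when q − ℓ < p + k). -/

import Mathlib

variable {R : Type*} [CommRing R]

/-- Elementary symmetric polynomial `e_m` of the entries of a list (zero for `m < 0`). -/
def esymL (l : List R) (m : ℤ) : R :=
  if 0 ≤ m then
    ∑ s ∈ Finset.powersetCard m.toNat (Finset.univ : Finset (Fin l.length)), ∏ i ∈ s, l.get i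
  else 0

/-- Complete homogeneous symmetric polynomial `h_m` of the entries of a list (zero for `m < 0`). -/
def hsymL (l : List R) (m : ℤ) : R :=
  if 0 ≤ m then
    ∑ s ∈ (Finset.univ : Finset (Fin l.length)).sym m.toNat, ((s.1).map l.get).prod
  else 0

/-- The list `f a, f (a+1), …, f b` (empty if `b < a`). -/
def intList (f : ℤ → R) (a b : ℤ) : List R :=
  (List.range (b + 1 - a).toNat).map (fun p => f (a + (p : ℤ)))

/-- `e_m(f a, …, f b)`. -/
def eI (f : ℤ → R) (a b m : ℤ) : R := esymL (intList f a b) m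

/-- `h_m(f a, …, f b)`. -/
def hI (f : ℤ → R) (a b m : ℤ) : R := hsymL (intList f a b) m

/-- The matrix entries `A^k_{ij}` of the deformed current operator `J_k^{(α)}`:
`A^k_{ij} = e_{j−i−k}(−α_{i+1},…,−α_{j−1})` if `k > 0` and `j ≥ i + k`;
`A^k_{ij} = h_{j−i−k}(α_j,…,α_i)` if `k ≤ 0` and `j ≤ i ≤ j − k`; `0` otherwise. -/
def Amat (α : ℤ → R) (k i j : ℤ) : R :=
  if 0 < k ∧ i + k ≤ j then eI (fun t => -α t) (i + 1) (j - 1) (j - i - k)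
  else if k ≤ 0 ∧ j ≤ i ∧ i ≤ j - k then hI α j i (j - i - k)
  else 0

/-! ### Auxiliary lemmas -/

lemma Multiset.esymm_zero' (s : Multiset R) : s.esymm 0 = 1 := by
  simp [Multiset.esymm, Multiset.powersetCard_zero_left]

lemma Multiset.esymm_cons (a : R) (s : Multiset R) (n : ℕ) :
    (a ::ₘ s).esymm (n + 1) = s.esymm (n + 1) + a * s.esymm n := by
  rw [Multiset.esymm, Multiset.powersetCard_cons, Multiset.map_add, Multiset.sum_add,
    Multiset.map_map]
  congr 1
  have : ((Multiset.prod ∘ Multiset.cons a)) = fun t : Multiset R => a * t.prod := by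
    funext t; simp [Multiset.prod_cons]
  rw [this, Multiset.esymm, ← Multiset.sum_map_mul_left]

lemma Multiset.esymm_eq_zero_of_card_lt (s : Multiset R) {n : ℕ} (h : Multiset.card s < n) :
    s.esymm n = 0 := by
  simp [Multiset.esymm, Multiset.powersetCard_eq_empty _ h]

lemma esymL_eq_esymm (l : List R) {m : ℤ} (hm : 0 ≤ m) :
    esymL l m = Multiset.esymm (↑l) m.toNat := by
  rw [esymL, if_pos hm]
  have h : (↑l : Multiset R) = (Finset.univ : Finset (Fin l.length)).val.map l.get := by
    rw [Fin.univ_val_map, List.ofFn_get]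
  rw [h, Finset.esymm_map_val]

lemma esymL_neg (l : List R) {m : ℤ} (hm : m < 0) : esymL l m = 0 :=
  if_neg (by omega)

lemma esymL_zero (l : List R) : esymL l 0 = 1 := by
  rw [esymL_eq_esymm l le_rfl]
  exact Multiset.esymm_zero' _

lemma esymL_of_length_lt (l : List R) {m : ℤ} (h : (l.length : ℤ) < m) : esymL l m = 0 := by
  have hm : 0 ≤ m := by omega
  rw [esymL_eq_esymm l hm]
  apply Multiset.esymm_eq_zero_of_card_lt
  simp only [Multiset.coe_card]
  omega

lemma esymL_cons (x : R) (l : List R) (m : ℤ) :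
    esymL (x :: l) m = esymL l m + x * esymL l (m - 1) := by
  rcases lt_trichotomy m 0 with h | h | h
  · rw [esymL_neg _ h, esymL_neg _ h, esymL_neg _ (by omega), mul_zero, add_zero]
  · subst h
    rw [esymL_zero, esymL_zero, esymL_neg _ (by norm_num), mul_zero, add_zero]
  · have h0 : 0 ≤ m := le_of_lt h
    have h1 : 0 ≤ m - 1 := by omega
    rw [esymL_eq_esymm _ h0, esymL_eq_esymm _ h0, esymL_eq_esymm _ h1]
    have hc : (↑(x :: l) : Multiset R) = x ::ₘ (↑l : Multiset R) := rfl
    have hn : m.toNat = (m - 1).toNat + 1 := by omega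
    rw [hc, hn, Multiset.esymm_cons]

lemma intList_eq (f : ℤ → R) (a b : ℤ) :
    intList f a b = (List.range (b + 1 - a).toNat).map (fun p : ℕ => f (a + (p : ℤ))) := by
  rw [intList]
  induction (List.range (b + 1 - a).toNat) with
  | nil => rfl
  | cons x xs ih => simpa using ih

lemma intList_cons (f : ℤ → R) {a b : ℤ} (h : a ≤ b) :
    intList f a b = f a :: intList f (a + 1) b := by
  have hh : (b + 1 - a).toNat = (b + 1 - (a + 1)).toNat + 1 := by omega
  rw [intList_eq, intList_eq, hh, List.range_succ_eq_map, List.map_cons, List.map_map]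
  congr 1
  · simp
  · refine List.map_congr_left fun p _ => ?_
    simp only [Function.comp_apply]
    congr 1
    push_cast
    ring

lemma intList_length (f : ℤ → R) (a b : ℤ) :
    (intList f a b).length = (b + 1 - a).toNat := by
  rw [intList_eq, List.length_map, List.length_range]

lemma eI_neg (f : ℤ → R) (a b : ℤ) {m : ℤ} (hm : m < 0) : eI f a b m = 0 :=
  esymL_neg _ hm

lemma eI_zero (f : ℤ → R) (a b : ℤ) : eI f a b 0 = 1 :=
  esymL_zero _

lemma eI_of_lt (f : ℤ → R) {a b m : ℤ} (h0 : a ≤ b + 1) (h : b + 1 - a < m) : eI f a b m = 0 := by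
  apply esymL_of_length_lt
  rw [intList_length]
  omega

lemma eI_cons (f : ℤ → R) {a b : ℤ} (h : a ≤ b) (m : ℤ) :
    eI f a b m = eI f (a + 1) b m + f a * eI f (a + 1) b (m - 1) := by
  rw [eI, intList_cons f h, esymL_cons]; rfl

lemma Amat_pos (α : ℤ → R) {k : ℤ} (hk : 0 < k) (p q : ℤ) :
    Amat α k p q = if p + k ≤ q then eI (fun t => -α t) (p + 1) (q - 1) (q - p - k) else 0 := by
  rw [Amat]
  by_cases h : p + k ≤ q
  · rw [if_pos ⟨hk, h⟩, if_pos h]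
  · rw [if_neg (fun hh => h hh.2), if_neg (fun hh => absurd hk (not_lt.2 hh.1)), if_neg h]

lemma Amat_diag (α : ℤ → R) {k : ℤ} (hk : 0 < k) (p : ℤ) : Amat α k p (p + k) = 1 := by
  rw [Amat_pos α hk, if_pos le_rfl, show p + k - p - k = 0 by ring, eI_zero]

lemma Amat_rec (α : ℤ → R) {m p j : ℤ} (hm : 2 ≤ m) (hj : p + m ≤ j) :
    Amat α m p j = Amat α (m - 1) (p + 1) j + (-α (p + 1)) * Amat α m (p + 1) j := by
  rw [Amat_pos α (by omega : (0:ℤ) < m), if_pos hj,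
    Amat_pos α (by omega : (0:ℤ) < m - 1) (p + 1) j, if_pos (by omega),
    Amat_pos α (by omega : (0:ℤ) < m) (p + 1) j,
    eI_cons _ (by omega : p + 1 ≤ j - 1)]
  congr 1
  · rw [show p + 1 + 1 = p + 2 by ring, show j - (p + 1) - (m - 1) = j - p - m by ring]
  · by_cases h : p + 1 + m ≤ j
    · rw [if_pos h, show p + 1 + 1 = p + 2 by ring,
        show j - (p + 1) - m = j - p - m - 1 by ring]
    · rw [if_neg h, eI_neg _ _ _ (by omega : j - p - m - 1 < 0), mul_zero]

lemma Amat_one_rec (α : ℤ → R) {p a : ℤ} (h : p + 2 ≤ a) :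
    Amat α 1 p a = (-α (p + 1)) * Amat α 1 (p + 1) a := by
  rw [Amat_pos α one_pos, if_pos (by omega), Amat_pos α one_pos (p + 1) a, if_pos (by omega),
    eI_cons _ (by omega : p + 1 ≤ a - 1),
    eI_of_lt _ (show p + 1 + 1 ≤ a - 1 + 1 by omega)
      (show a - 1 + 1 - (p + 1 + 1) < a - p - 1 by omega), zero_add,
    show a - p - 1 - 1 = a - (p + 1) - 1 by ring]

lemma Amat_sum (α : ℤ → R) : ∀ n : ℕ, ∀ k l p q : ℤ, 1 ≤ k → 1 ≤ l → (q - p).toNat ≤ n →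
    ∑ a ∈ Finset.Icc (p + k) (q - l), Amat α k p a * Amat α l a q = Amat α (k + l) p q := by
  intro n
  induction n with
  | zero =>
    intro k l p q hk hl hn
    rw [Finset.Icc_eq_empty (by omega : ¬ p + k ≤ q - l), Finset.sum_empty,
      Amat_pos α (by omega : (0:ℤ) < k + l), if_neg (by omega)]
  | succ n ih =>
    intro k l p q hk hl hn
    by_cases hqp : q - l < p + k
    · rw [Finset.Icc_eq_empty (not_le.2 hqp), Finset.sum_empty,
        Amat_pos α (by omega : (0:ℤ) < k + l), if_neg (by omega)]
    push_neg at hqp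
    have hn' : (q - (p + 1)).toNat ≤ n := by omega
    rcases eq_or_lt_of_le hk with hk1 | hk2
    · -- k = 1
      obtain rfl : k = 1 := hk1.symm
      have hsplit : Finset.Icc (p + 1) (q - l) = insert (p + 1) (Finset.Icc (p + 2) (q - l)) := by
        ext x; simp only [Finset.mem_Icc, Finset.mem_insert]; omega
      rw [hsplit, Finset.sum_insert (by simp only [Finset.mem_Icc]; omega)]
      have h1 : Amat α 1 p (p + 1) = 1 := Amat_diag α one_pos p
      rw [h1, one_mul]
      have hsum : ∑ a ∈ Finset.Icc (p + 2) (q - l), Amat α 1 p a * Amat α l a q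
          = (-α (p + 1)) * ∑ a ∈ Finset.Icc (p + 2) (q - l),
              Amat α 1 (p + 1) a * Amat α l a q := by
        rw [Finset.mul_sum]
        refine Finset.sum_congr rfl fun a ha => ?_
        rw [Amat_one_rec α (Finset.mem_Icc.1 ha).1]
        ring
      have hIH := ih 1 l (p + 1) q le_rfl hl hn'
      rw [show p + 1 + 1 = p + 2 by ring] at hIH
      rw [hsum, hIH, Amat_rec α (by omega : 2 ≤ 1 + l) (by omega : p + (1 + l) ≤ q),
        show 1 + l - 1 = l by ring]
    · -- 2 ≤ k
      have step : ∀ a ∈ Finset.Icc (p + k) (q - l), Amat α k p a * Amat α l a q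
          = Amat α (k - 1) (p + 1) a * Amat α l a q
            + (-α (p + 1)) * (Amat α k (p + 1) a * Amat α l a q) := by
        intro a ha
        rw [Amat_rec α hk2 (Finset.mem_Icc.1 ha).1]
        ring
      rw [Finset.sum_congr rfl step, Finset.sum_add_distrib, ← Finset.mul_sum]
      have hIH1 := ih (k - 1) l (p + 1) q (by omega) hl hn'
      rw [show p + 1 + (k - 1) = p + k by ring] at hIH1
      have hsplit : Finset.Icc (p + k) (q - l) = insert (p + k) (Finset.Icc (p + k + 1) (q - l)) := by
        ext x; simp only [Finset.mem_Icc, Finset.mem_insert]; omega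
      have hzero : Amat α k (p + 1) (p + k) = 0 := by
        rw [Amat_pos α (by omega : (0:ℤ) < k), if_neg (by omega)]
      have hIH2 := ih k l (p + 1) q (by omega) hl hn'
      rw [show p + 1 + k = p + k + 1 by ring] at hIH2
      have hsum2 : ∑ a ∈ Finset.Icc (p + k) (q - l), Amat α k (p + 1) a * Amat α l a q
          = Amat α (k + l) (p + 1) q := by
        rw [hsplit, Finset.sum_insert (by simp only [Finset.mem_Icc]; omega), hzero, zero_mul,
          zero_add, hIH2]
      rw [hIH1, hsum2, Amat_rec α (by omega : 2 ≤ k + l) (by omega : p + (k + l) ≤ q),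
        show k - 1 + l = k + l - 1 by ring]

/-- Lemma 3.2: for k, ℓ > 0, the product A^k_{p,a} · A^ℓ_{a,q} vanishes unless
p + k ≤ a ≤ q − ℓ, and ∑_{a=p+k}^{q−ℓ} A^k_{p,a} A^ℓ_{a,q} = A^{k+ℓ}_{p,q}. -/
theorem Amat_mul_pos (α : ℤ → R) (k l p q : ℤ) (hk : 0 < k) (hl : 0 < l) :
    (∀ a : ℤ, a ∉ Finset.Icc (p + k) (q - l) → Amat α k p a * Amat α l a q = 0) ∧
      ∑ a ∈ Finset.Icc (p + k) (q - l), Amat α k p a * Amat α l a q = Amat α (k + l) p q := by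
  constructor
  · intro a ha
    rw [Finset.mem_Icc, not_and_or] at ha
    rcases ha with ha | ha
    · rw [Amat_pos α hk, if_neg (by omega), zero_mul]
    · rw [Amat_pos α hl a q, if_neg (by omega), mul_zero]
  · exact Amat_sum α (q - p).toNat k l p q hk hl le_rfl
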